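/- If H = n - o(n) honest nodes each independently choose a uniformly random rank in {1,...,n}, then for all sufficiently large n, with high probability at least n/8 ranks are chosen by exactly one honest node. -/

import Mathlib

open MeasureTheory ProbabilityTheory Filter
open scoped ENNReal

open Finset

lemma aux_count (n m : ℕ) (f : Fin m → Fin n) :
    2 * n ≤ (univ.filter fun i : Fin n => (univ.filter fun j => f j = i).card = 1).card
      + 2 * (univ.filter fun i : Fin n => (univ.filter fun j => f j = i).card = 0).card + m := by
  classical
  have hm : m = ∑ i : Fin n, (univ.filter fun j => f j = i).card := by
    simpa using Finset.card_eq_sum_card_fiberwise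
      (f := f) (s := univ) (t := univ) (fun x _ => mem_univ _)
  have h0 : (univ.filter fun i : Fin n => (univ.filter fun j => f j = i).card = 0).card
      + ((univ.filter fun i : Fin n => ¬ (univ.filter fun j => f j = i).card = 0).card) = n := by
    simpa using Finset.card_filter_add_card_filter_not
      (s := (univ : Finset (Fin n))) (p := fun i => (univ.filter fun j => f j = i).card = 0)
  have h1 : ((univ.filter fun i : Fin n => ¬ (univ.filter fun j => f j = i).card = 0).filter
        (fun i => (univ.filter fun j => f j = i).card = 1)).card
      + ((univ.filter fun i : Fin n => ¬ (univ.filter fun j => f j = i).card = 0).filter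
        (fun i => ¬ (univ.filter fun j => f j = i).card = 1)).card
      = (univ.filter fun i : Fin n => ¬ (univ.filter fun j => f j = i).card = 0).card := by
    exact Finset.card_filter_add_card_filter_not _
  rw [Finset.filter_filter, Finset.filter_filter] at h1
  have e1 : (univ.filter fun i : Fin n => ¬ (univ.filter fun j => f j = i).card = 0
        ∧ (univ.filter fun j => f j = i).card = 1)
      = (univ.filter fun i : Fin n => (univ.filter fun j => f j = i).card = 1) := by
    apply Finset.filter_congr; intro i _; constructor
    · exact fun h => h.2
    · intro h; exact ⟨by omega, h⟩
  have e2 : (univ.filter fun i : Fin n => ¬ (univ.filter fun j => f j = i).card = 0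
        ∧ ¬ (univ.filter fun j => f j = i).card = 1)
      = (univ.filter fun i : Fin n => 2 ≤ (univ.filter fun j => f j = i).card) := by
    apply Finset.filter_congr; intro i _; constructor
    · intro h; omega
    · intro h; omega
  rw [e1, e2] at h1
  -- sum bound
  have hsub : (univ.filter fun i : Fin n => (univ.filter fun j => f j = i).card = 1)
      ∪ (univ.filter fun i : Fin n => 2 ≤ (univ.filter fun j => f j = i).card) ⊆ univ :=
    subset_univ _
  have hdisj : Disjoint (univ.filter fun i : Fin n => (univ.filter fun j => f j = i).card = 1)
      (univ.filter fun i : Fin n => 2 ≤ (univ.filter fun j => f j = i).card) := by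
    rw [Finset.disjoint_left]
    intro i hi1 hi2
    simp only [Finset.mem_filter] at hi1 hi2
    omega
  have hsum : ∑ i ∈ ((univ.filter fun i : Fin n => (univ.filter fun j => f j = i).card = 1)
        ∪ (univ.filter fun i : Fin n => 2 ≤ (univ.filter fun j => f j = i).card)),
        (univ.filter fun j => f j = i).card
      ≤ ∑ i : Fin n, (univ.filter fun j => f j = i).card :=
    Finset.sum_le_sum_of_subset hsub
  rw [Finset.sum_union hdisj] at hsum
  have hA : ∑ i ∈ (univ.filter fun i : Fin n => (univ.filter fun j => f j = i).card = 1),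
      (univ.filter fun j => f j = i).card
      = (univ.filter fun i : Fin n => (univ.filter fun j => f j = i).card = 1).card := by
    rw [Finset.sum_congr rfl (fun i hi => (Finset.mem_filter.mp hi).2)]
    simp
  have hB : 2 * (univ.filter fun i : Fin n => 2 ≤ (univ.filter fun j => f j = i).card).card
      ≤ ∑ i ∈ (univ.filter fun i : Fin n => 2 ≤ (univ.filter fun j => f j = i).card),
        (univ.filter fun j => f j = i).card := by
    have := Finset.card_nsmul_le_sum
      (s := univ.filter fun i : Fin n => 2 ≤ (univ.filter fun j => f j = i).card)
      (f := fun i => (univ.filter fun j => f j = i).card) (n := 2)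
      (fun i hi => (Finset.mem_filter.mp hi).2)
    simpa [mul_comm] using this
  omega

open Finset

lemma aux_exp : Real.exp (-(1999/2000)) ≤ 0.3681 := by
  have h1 : Real.exp (-(1999/2000)) = Real.exp (1/2000) / Real.exp 1 := by
    rw [← Real.exp_sub]; norm_num
  have h2 : Real.exp (1/2000) ≤ 2000/1999 := by
    have h3 := Real.add_one_le_exp (-(1/2000 : ℝ))
    rw [Real.exp_neg] at h3
    have h5 : (0:ℝ) < Real.exp (1/2000) := Real.exp_pos _
    rw [neg_add_eq_sub] at h3
    have h6 : (1 - 1/2000 : ℝ) * Real.exp (1/2000) ≤ 1 := by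
      calc (1 - 1/2000 : ℝ) * Real.exp (1/2000)
          ≤ (Real.exp (1/2000))⁻¹ * Real.exp (1/2000) := by
            apply mul_le_mul_of_nonneg_right _ h5.le
            convert h3 using 1
        _ = 1 := inv_mul_cancel₀ h5.ne'
    nlinarith
  have h6 : (2.7182818283 : ℝ) < Real.exp 1 := Real.exp_one_gt_d9
  rw [h1, div_le_iff₀ (Real.exp_pos 1)]
  nlinarith

lemma aux_q (n m : ℕ) (hn : 0 < n) (hm : (1999/2000 : ℝ) * n ≤ m) :
    ((n - 1 : ℝ)/n)^m ≤ 0.3681 := by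
  have hn' : (0:ℝ) < n := by exact_mod_cast hn
  have hb : ((n - 1 : ℝ)/n) ≤ Real.exp (-(1/n)) := by
    have := Real.add_one_le_exp (-(1/n : ℝ))
    have : 1 - 1/(n:ℝ) ≤ Real.exp (-(1/n)) := by linarith
    calc ((n - 1 : ℝ)/n) = 1 - 1/(n:ℝ) := by field_simp
      _ ≤ _ := this
  have hb0 : (0:ℝ) ≤ (n - 1 : ℝ)/n := by
    apply div_nonneg _ hn'.le
    have : (1:ℝ) ≤ n := by exact_mod_cast hn
    linarith
  calc ((n - 1 : ℝ)/n)^m ≤ (Real.exp (-(1/n)))^m := pow_le_pow_left₀ hb0 hb m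
    _ = Real.exp (m * (-(1/n))) := (Real.exp_nat_mul _ m).symm
    _ ≤ Real.exp (-(1999/2000)) := by
        apply Real.exp_le_exp.mpr
        rw [mul_neg, neg_le_neg_iff]
        rw [mul_one_div, le_div_iff₀ hn']
        linarith
    _ ≤ 0.3681 := aux_exp

lemma aux_num (n m a : ℕ) (hn : 0 < n) (hm1 : (1999/2000:ℝ) * n ≤ m)
    (ha : (7 * n : ℝ)/16 ≤ (a:ℝ)) (hgeo : (n:ℝ) * 0.9907^n ≤ 1) :
    (4/5:ℝ)^a * (1 + ((n-1:ℝ)/n)^m/4)^n ≤ 1/n := by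
  have hn' : (0:ℝ) < n := by exact_mod_cast hn
  set q : ℝ := ((n-1:ℝ)/n)^m with hqdef
  have hq : q ≤ 0.3681 := aux_q n m hn hm1
  have hq0 : (0:ℝ) ≤ q := by
    apply pow_nonneg
    apply div_nonneg _ hn'.le
    have : (1:ℝ) ≤ n := by exact_mod_cast hn
    linarith
  have h2 : (1 + q/4)^n ≤ (1.0921:ℝ)^n := by
    apply pow_le_pow_left₀ (by positivity)
    nlinarith
  have h3 : (4/5:ℝ)^a ≤ (0.9071:ℝ)^n := by
    set x : ℝ := (4/5:ℝ) ^ ((7/16:ℝ)) with hx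
    have hx0 : (0:ℝ) ≤ x := Real.rpow_nonneg (by norm_num) _
    have hx16 : x^(16:ℕ) = (4/5:ℝ)^(7:ℕ) := by
      rw [hx, ← Real.rpow_natCast ((4/5:ℝ) ^ ((7/16:ℝ))) 16, ← Real.rpow_mul (by norm_num)]
      norm_num
    have hxle : x ≤ 0.9071 := by
      apply le_of_pow_le_pow_left₀ (n := 16) (by norm_num) (by norm_num)
      rw [hx16]; norm_num
    calc (4/5:ℝ)^a = (4/5:ℝ)^((a:ℝ)) := (Real.rpow_natCast _ a).symm
      _ ≤ (4/5:ℝ)^((7/16:ℝ) * n) := by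
          apply Real.rpow_le_rpow_of_exponent_ge (by norm_num) (by norm_num)
          rw [mul_comm]
          calc ((n:ℝ)) * (7/16) = (7*n:ℝ)/16 := by ring
            _ ≤ (a:ℝ) := ha
      _ = x ^ ((n:ℝ)) := by rw [hx, ← Real.rpow_mul (by norm_num)]
      _ = x ^ n := Real.rpow_natCast _ n
      _ ≤ (0.9071:ℝ)^n := pow_le_pow_left₀ hx0 hxle n
  calc (4/5:ℝ)^a * (1 + q/4)^n ≤ (0.9071:ℝ)^n * (1.0921:ℝ)^n := by
        apply mul_le_mul h3 h2 (by positivity) (by positivity)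
    _ = (0.9071 * 1.0921 : ℝ)^n := (mul_pow _ _ _).symm
    _ ≤ (0.9907:ℝ)^n := by apply pow_le_pow_left₀ (by norm_num) (by norm_num)
    _ ≤ 1/n := by
        rw [le_div_iff₀ hn', mul_comm]
        exact hgeo

lemma aux_bern (n k m : ℕ) (hn : 0 < n) (hk : k ≤ n) :
    (((n - k : ℕ) : ℝ)/n)^m ≤ (((n-1:ℝ)/n)^m)^k := by
  have hn' : (0:ℝ) < n := by exact_mod_cast hn
  have h1 : (((n - k : ℕ) : ℝ)/n) ≤ ((n-1:ℝ)/n)^k := by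
    have hcast : ((n - k : ℕ) : ℝ) = (n:ℝ) - k := by
      rw [Nat.cast_sub hk]
    have h1n : (1:ℝ)/n ≤ 1 := by
      rw [div_le_one hn']
      exact_mod_cast hn
    have hbern := one_add_mul_le_pow (a := -(1/(n:ℝ))) (by linarith) k
    have e2 : (1 + -(1/(n:ℝ))) = ((n:ℝ)-1)/n := by field_simp; ring
    rw [hcast]
    calc ((n:ℝ) - k)/n = 1 + (k:ℝ) * (-(1/n)) := by field_simp; ring
      _ ≤ (1 + -(1/(n:ℝ)))^k := hbern
      _ = (((n:ℝ)-1)/n)^k := by rw [e2]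
  have hb0 : (0:ℝ) ≤ ((n - k : ℕ) : ℝ)/n := by positivity
  calc (((n - k : ℕ) : ℝ)/n)^m ≤ (((n-1:ℝ)/n)^k)^m := pow_le_pow_left₀ hb0 h1 m
    _ = (((n-1:ℝ)/n)^m)^k := by rw [← pow_mul, ← pow_mul, Nat.mul_comm]

lemma aux_prob (n m : ℕ) (hn : 0 < n) (Ω : Type) [MeasureSpace Ω]
    (hP : IsProbabilityMeasure (ℙ : Measure Ω)) (R : Fin m → Ω → Fin n)
    (hmeas : ∀ j, Measurable (R j))
    (hind : iIndepFun R ℙ)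
    (hunif : ∀ j i, ℙ {ω | R j ω = i} = 1 / n) (a : ℕ) :
    ℙ {ω | a < (univ.filter fun i : Fin n =>
        (univ.filter fun j => R j ω = i).card = 0).card}
      ≤ ENNReal.ofReal ((4/5)^(a+1) * (1 + ((n-1:ℝ)/n)^m / 4)^n) := by
  classical
  set q : ℝ := ((n-1:ℝ)/n)^m with hqdef
  have hn' : (0:ℝ) < n := by exact_mod_cast hn
  have hq0 : (0:ℝ) ≤ q := by
    apply pow_nonneg
    apply div_nonneg _ hn'.le
    have : (1:ℝ) ≤ n := by exact_mod_cast hn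
    linarith
  set Q : Fin n → Ω → Prop := fun i ω => (univ.filter fun j => R j ω = i).card = 0 with hQdef
  have hQiff : ∀ i ω, Q i ω ↔ ∀ j, R j ω ≠ i := by
    intro i ω
    simp [hQdef, Finset.card_eq_zero, Finset.filter_eq_empty_iff]
  set A : Fin n → Set Ω := fun i => {ω | Q i ω} with hAdef
  have hInter : ∀ S : Finset (Fin n),
      (⋂ i ∈ S, A i) = ⋂ j, (R j)⁻¹' ((↑S : Set (Fin n))ᶜ) := by
    intro S
    ext ω
    simp only [Set.mem_iInter, Set.mem_preimage, Set.mem_compl_iff, Finset.mem_coe,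
      hAdef, Set.mem_setOf_eq]
    constructor
    · intro h j hj
      exact (hQiff _ _).1 (h _ hj) j rfl
    · intro h i hi
      rw [hQiff]
      intro j hEq
      exact h j (hEq ▸ hi)
  have hAS : ∀ S : Finset (Fin n), MeasurableSet (⋂ i ∈ S, A i) := by
    intro S
    rw [hInter S]
    exact MeasurableSet.iInter fun j => (hmeas j) trivial
  -- measure of intersections
  have hprod : ∀ S : Finset (Fin n),
      ℙ (⋂ i ∈ S, A i) = ENNReal.ofReal ((((n - S.card : ℕ) : ℝ)/n)^m) := by
    intro S
    rw [hInter S]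
    have hsets : ∀ j, MeasurableSet[(inferInstance : MeasurableSpace (Fin n)).comap (R j)]
        ((R j)⁻¹' ((↑S : Set (Fin n))ᶜ)) :=
      fun j => ⟨(↑S : Set (Fin n))ᶜ, trivial, rfl⟩
    rw [hind.meas_iInter hsets]
    have hone : ∀ j, ℙ ((R j)⁻¹' ((↑S : Set (Fin n))ᶜ)) = ((n - S.card : ℕ) : ℝ≥0∞) * (1/n) := by
      intro j
      have hdecomp : (R j)⁻¹' ((↑S : Set (Fin n))ᶜ) = ⋃ i ∈ (Sᶜ : Finset (Fin n)), {ω | R j ω = i} := by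
        ext ω
        simp [eq_comm]
      rw [hdecomp, measure_biUnion_finset]
      · rw [Finset.sum_congr rfl (fun i _ => hunif j i), Finset.sum_const,
          Finset.card_compl, Fintype.card_fin]
        simp [nsmul_eq_mul]
      · intro x _ y _ hxy
        simp only [Function.onFun]
        apply Set.disjoint_left.mpr
        intro ω h1 h2
        simp only [Set.mem_setOf_eq] at h1 h2
        exact hxy (by rw [← h1, ← h2])
      · intro i _
        exact (hmeas j) (measurableSet_singleton i)
    rw [Finset.prod_congr rfl (fun j _ => hone j), Finset.prod_const, Finset.card_univ,
      Fintype.card_fin]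
    have hcv : ((n - S.card : ℕ) : ℝ≥0∞) * (1/(n:ℝ≥0∞)) = ENNReal.ofReal (((n - S.card : ℕ) : ℝ)/n) := by
      rw [ENNReal.ofReal_div_of_pos hn', ENNReal.ofReal_natCast, ENNReal.ofReal_natCast]
      simp [div_eq_mul_inv]
    rw [hcv, ← ENNReal.ofReal_pow (by positivity)]
  set c : ℝ≥0∞ := (4:ℝ≥0∞)⁻¹ with hc
  set W : Ω → ℝ≥0∞ := fun ω => ∑ S ∈ (univ : Finset (Fin n)).powerset,
      c^S.card * (⋂ i ∈ S, A i).indicator (fun _ => (1:ℝ≥0∞)) ω with hW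
  have hWmeas : Measurable W := by
    apply Finset.measurable_sum
    intro S _
    exact (measurable_const.indicator (hAS S)).const_mul _
  have hWval : ∀ ω, W ω = (1 + c)^((univ.filter fun i : Fin n => Q i ω).card) := by
    intro ω
    have h1 : ∀ S : Finset (Fin n), (⋂ i ∈ S, A i).indicator (fun _ => (1:ℝ≥0∞)) ω
        = if ∀ i ∈ S, Q i ω then 1 else 0 := by
      intro S
      have hmem : ω ∈ (⋂ i ∈ S, A i) ↔ ∀ i ∈ S, Q i ω := by
        simp [hAdef]
      by_cases h : ∀ i ∈ S, Q i ω
      · rw [if_pos h, Set.indicator_of_mem (hmem.mpr h)]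
      · rw [if_neg h, Set.indicator_of_notMem (fun hm => h (hmem.mp hm))]
    have h3 : ∀ t : Finset (Fin n), (∏ i ∈ t, if Q i ω then c else 0)
        = if (∀ i ∈ t, Q i ω) then c^t.card else 0 := by
      intro t
      by_cases h : ∀ i ∈ t, Q i ω
      · rw [if_pos h, Finset.prod_congr rfl (fun i hi => if_pos (h i hi)), Finset.prod_const]
      · rw [if_neg h]
        push_neg at h
        obtain ⟨i, hi, hQi⟩ := h
        exact Finset.prod_eq_zero hi (if_neg hQi)
    have h2 := Finset.prod_add (fun i : Fin n => if Q i ω then c else 0)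
      (fun _ : Fin n => (1:ℝ≥0∞)) univ
    simp only [Finset.prod_const_one, mul_one] at h2
    calc W ω = ∑ S ∈ (univ : Finset (Fin n)).powerset,
          c^S.card * (if ∀ i ∈ S, Q i ω then 1 else 0) := by
          rw [hW]
          exact Finset.sum_congr rfl (fun S _ => by rw [h1 S])
      _ = ∑ S ∈ (univ : Finset (Fin n)).powerset, ∏ i ∈ S, (if Q i ω then c else 0) := by
          refine Finset.sum_congr rfl (fun S _ => ?_)
          rw [h3 S, mul_ite, mul_one, mul_zero]
      _ = ∏ i : Fin n, ((if Q i ω then c else 0) + 1) := h2.symm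
      _ = ∏ i : Fin n, (if Q i ω then 1 + c else 1) := by
          refine Finset.prod_congr rfl (fun i _ => ?_)
          by_cases h : Q i ω
          · rw [if_pos h, if_pos h, add_comm]
          · rw [if_neg h, if_neg h, zero_add]
      _ = ∏ i ∈ univ.filter (fun i : Fin n => Q i ω), (1 + c) := by
          rw [Finset.prod_filter]
      _ = (1 + c)^((univ.filter fun i : Fin n => Q i ω).card) := Finset.prod_const _
  -- Markov
  have hsubset : {ω | a < (univ.filter fun i : Fin n => Q i ω).card}
      ⊆ {ω | (1+c)^(a+1) ≤ W ω} := by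
    intro ω hω
    rw [Set.mem_setOf_eq, hWval ω]
    exact pow_le_pow_right' le_self_add hω
  -- integral of W
  have hint : ∫⁻ ω, W ω ∂ℙ = ∑ S ∈ (univ : Finset (Fin n)).powerset,
      c^S.card * ℙ (⋂ i ∈ S, A i) := by
    rw [hW, lintegral_finset_sum _ (fun S _ => (measurable_const.indicator (hAS S)).const_mul _)]
    refine Finset.sum_congr rfl (fun S _ => ?_)
    rw [lintegral_const_mul _ (measurable_const.indicator (hAS S))]
    congr 1
    rw [show (fun (_:Ω) => (1:ℝ≥0∞)) = (1 : Ω → ℝ≥0∞) from rfl, lintegral_indicator_one (hAS S)]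
  have hq' : ∀ S : Finset (Fin n), ℙ (⋂ i ∈ S, A i) ≤ (ENNReal.ofReal q)^S.card := by
    intro S
    rw [hprod S, ← ENNReal.ofReal_pow hq0]
    apply ENNReal.ofReal_le_ofReal
    rw [hqdef]
    exact aux_bern n S.card m hn (by simpa using Finset.card_le_univ S)
  have hsum_le : ∑ S ∈ (univ : Finset (Fin n)).powerset, c^S.card * ℙ (⋂ i ∈ S, A i)
      ≤ (c * ENNReal.ofReal q + 1)^n := by
    have hgeom : ∑ S ∈ (univ : Finset (Fin n)).powerset, (c * ENNReal.ofReal q)^S.card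
        = (c * ENNReal.ofReal q + 1)^n := by
      have h2 := Finset.prod_add (fun _ : Fin n => c * ENNReal.ofReal q)
        (fun _ : Fin n => (1:ℝ≥0∞)) univ
      simp only [Finset.prod_const_one, mul_one, Finset.prod_const, Finset.card_univ,
        Fintype.card_fin] at h2
      exact h2.symm
    rw [← hgeom]
    apply Finset.sum_le_sum
    intro S _
    rw [mul_pow]
    exact mul_le_mul_right (hq' S) _
  have hmarkov : (1+c)^(a+1) * ℙ {ω | a < (univ.filter fun i : Fin n => Q i ω).card}
      ≤ (c * ENNReal.ofReal q + 1)^n := by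
    calc (1+c)^(a+1) * ℙ {ω | a < (univ.filter fun i : Fin n => Q i ω).card}
        ≤ (1+c)^(a+1) * ℙ {ω | (1+c)^(a+1) ≤ W ω} :=
          mul_le_mul_right (measure_mono hsubset) _
      _ ≤ ∫⁻ ω, W ω ∂ℙ := mul_meas_ge_le_lintegral₀ hWmeas.aemeasurable _
      _ = ∑ S ∈ (univ : Finset (Fin n)).powerset, c^S.card * ℙ (⋂ i ∈ S, A i) := hint
      _ ≤ (c * ENNReal.ofReal q + 1)^n := hsum_le
  have hcoe1 : (1 + c : ℝ≥0∞) = ENNReal.ofReal (5/4) := by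
    rw [hc, show (5/4 : ℝ) = 1 + 1/4 by norm_num,
      ENNReal.ofReal_add (by norm_num) (by norm_num), ENNReal.ofReal_one]
    congr 1
    rw [ENNReal.ofReal_div_of_pos (by norm_num), ENNReal.ofReal_one, ENNReal.ofReal_ofNat, one_div]
  have hcoe2 : (c * ENNReal.ofReal q + 1) = ENNReal.ofReal (1 + q/4) := by
    rw [ENNReal.ofReal_add (by norm_num) (by positivity), ENNReal.ofReal_one, add_comm]
    congr 1
    rw [show q/4 = q * (1/4) by ring, ENNReal.ofReal_mul hq0, mul_comm, hc]
    congr 1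
    rw [ENNReal.ofReal_div_of_pos (by norm_num), ENNReal.ofReal_one, ENNReal.ofReal_ofNat, one_div]
  have hne0 : ENNReal.ofReal ((5/4:ℝ)^(a+1)) ≠ 0 := by
    simp only [ne_eq, ENNReal.ofReal_eq_zero, not_le]
    positivity
  have hfin : ℙ {ω | a < (univ.filter fun i : Fin n => Q i ω).card}
      ≤ ENNReal.ofReal ((1+q/4)^n) / ENNReal.ofReal ((5/4:ℝ)^(a+1)) := by
    rw [ENNReal.le_div_iff_mul_le (Or.inl hne0) (Or.inl ENNReal.ofReal_ne_top), mul_comm]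
    calc ENNReal.ofReal ((5/4:ℝ)^(a+1)) * ℙ {ω | a < (univ.filter fun i : Fin n => Q i ω).card}
        = (1+c)^(a+1) * ℙ {ω | a < (univ.filter fun i : Fin n => Q i ω).card} := by
          rw [hcoe1, ← ENNReal.ofReal_pow (by norm_num)]
      _ ≤ (c * ENNReal.ofReal q + 1)^n := hmarkov
      _ = ENNReal.ofReal ((1+q/4)^n) := by
          rw [hcoe2, ← ENNReal.ofReal_pow (by positivity)]
  have hdiv : ((5/4:ℝ)^(a+1))⁻¹ = (4/5:ℝ)^(a+1) := by
    rw [← inv_pow]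
    norm_num
  show ℙ {ω | a < (univ.filter fun i : Fin n => Q i ω).card} ≤ _
  calc ℙ {ω | a < (univ.filter fun i : Fin n => Q i ω).card}
      ≤ ENNReal.ofReal ((1+q/4)^n) / ENNReal.ofReal ((5/4:ℝ)^(a+1)) := hfin
    _ = ENNReal.ofReal ((1+q/4)^n / (5/4:ℝ)^(a+1)) := by
        rw [ENNReal.ofReal_div_of_pos (by positivity)]
    _ = ENNReal.ofReal ((4/5)^(a+1) * (1 + q / 4)^n) := by
        rw [div_eq_mul_inv, hdiv, mul_comm]

/- **Statement 5.** If `H = n - o(n)` honest nodes each independently choose a uniformly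
random rank in `{1,…,n}`, then for all sufficiently large `n`, with high probability
(probability at least `1 - 1/n^c`) at least `n/8` ranks are chosen by exactly one honest
node. -/
theorem stmt_5 (H : ℕ → ℕ) (hHle : ∀ n, H n ≤ n)
    (hH : (fun n : ℕ => (n : ℝ) - H n) =o[atTop] (fun n : ℕ => (n : ℝ))) :
    ∃ c : ℝ, 1 ≤ c ∧ ∀ᶠ n : ℕ in atTop,
      ∀ (Ω : Type) (_ : MeasureSpace Ω), IsProbabilityMeasure (ℙ : Measure Ω) →
      ∀ R : Fin (H n) → Ω → Fin n, (∀ j, Measurable (R j)) →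
        iIndepFun R ℙ →
        (∀ j i, ℙ {ω | R j ω = i} = 1 / n) →
        1 - ENNReal.ofReal (1 / (n : ℝ) ^ c) ≤
          ℙ {ω | (n : ℝ) / 8 ≤ ((Finset.univ.filter (fun i : Fin n =>
              (Finset.univ.filter (fun j => R j ω = i)).card = 1)).card : ℝ)} := by
  refine ⟨1, le_refl 1, ?_⟩
  have hsmall := hH.def (by norm_num : (0:ℝ) < 1/2000)
  have hgeo : Tendsto (fun n : ℕ => (n:ℝ) * 0.9907^n) atTop (nhds 0) :=
    tendsto_self_mul_const_pow_of_lt_one (by norm_num) (by norm_num)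
  have hgeo' : ∀ᶠ n : ℕ in atTop, (n:ℝ) * 0.9907^n ≤ 1 := by
    filter_upwards [hgeo.eventually_lt_const (by norm_num : (0:ℝ) < 1)] with n h
    exact h.le
  filter_upwards [hsmall, hgeo', eventually_ge_atTop 1] with n hs hg hn1
  intro Ω mΩ hPM R hmeas hind hunif
  have hn0 : 0 < n := hn1
  have hn' : (0:ℝ) < n := by exact_mod_cast hn0
  have hHn : (H n : ℝ) ≤ n := by exact_mod_cast hHle n
  have h2000 : (1999/2000:ℝ) * n ≤ H n := by
    simp only [Real.norm_eq_abs] at hs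
    rw [abs_of_nonneg (by linarith), abs_of_nonneg hn'.le] at hs
    linarith
  set a : ℕ := 7 * n / 16 with hadef
  have hbad := aux_prob n (H n) hn0 Ω hPM R hmeas hind hunif a
  have ha1 : (7 * n : ℝ)/16 ≤ ((a+1 : ℕ) : ℝ) := by
    have hdm := Nat.div_add_mod (7*n) 16
    have hmod : (7*n) % 16 < 16 := Nat.mod_lt _ (by norm_num)
    have : 7*n < 16*(a+1) := by omega
    have : (7*n : ℝ) < 16*((a+1:ℕ) : ℝ) := by exact_mod_cast this
    linarith
  have hnum : (4/5:ℝ)^(a+1) * (1 + ((n-1:ℝ)/n)^(H n)/4)^n ≤ 1/(n:ℝ) :=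
    aux_num n (H n) (a+1) hn0 h2000 ha1 hg
  have h3 : ℙ {ω | a < (univ.filter fun i : Fin n =>
        (univ.filter fun j => R j ω = i).card = 0).card}
      ≤ ENNReal.ofReal (1/(n:ℝ)^(1:ℝ)) := by
    refine hbad.trans (ENNReal.ofReal_le_ofReal ?_)
    rw [Real.rpow_one]
    exact hnum
  have hincl : {ω | ¬ (a < (univ.filter fun i : Fin n =>
        (univ.filter fun j => R j ω = i).card = 0).card)}
      ⊆ {ω | (n : ℝ) / 8 ≤ ((Finset.univ.filter (fun i : Fin n =>
          (Finset.univ.filter (fun j => R j ω = i)).card = 1)).card : ℝ)} := by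
    intro ω hω
    simp only [Set.mem_setOf_eq, not_lt] at hω
    have hcount := aux_count n (H n) (fun j => R j ω)
    have hEreal : ((univ.filter fun i : Fin n =>
        (univ.filter fun j => R j ω = i).card = 0).card : ℝ) ≤ (7*n:ℝ)/16 := by
      have hcast : ((a:ℕ):ℝ) ≤ (7*n:ℝ)/16 := by
        calc ((a:ℕ):ℝ) ≤ ((7*n : ℕ):ℝ)/((16:ℕ):ℝ) := Nat.cast_div_le
          _ = (7*n:ℝ)/16 := by push_cast; ring
      calc ((univ.filter fun i : Fin n =>
            (univ.filter fun j => R j ω = i).card = 0).card : ℝ) ≤ (a:ℝ) := by exact_mod_cast hω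
        _ ≤ (7*n:ℝ)/16 := hcast
    rw [Set.mem_setOf_eq]
    have hcount' : (2*n : ℝ) ≤ ((univ.filter fun i : Fin n =>
          (univ.filter fun j => R j ω = i).card = 1).card : ℝ)
        + 2 * ((univ.filter fun i : Fin n =>
          (univ.filter fun j => R j ω = i).card = 0).card : ℝ) + (H n : ℝ) := by
      exact_mod_cast hcount
    linarith
  have hsplit : (1:ℝ≥0∞) ≤ ℙ {ω | a < (univ.filter fun i : Fin n =>
        (univ.filter fun j => R j ω = i).card = 0).card}
      + ℙ {ω | ¬ (a < (univ.filter fun i : Fin n =>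
        (univ.filter fun j => R j ω = i).card = 0).card)} := by
    have hun : {ω | a < (univ.filter fun i : Fin n =>
          (univ.filter fun j => R j ω = i).card = 0).card}
        ∪ {ω | ¬ (a < (univ.filter fun i : Fin n =>
          (univ.filter fun j => R j ω = i).card = 0).card)} = Set.univ := by
      ext ω
      simp only [Set.mem_union, Set.mem_setOf_eq, Set.mem_univ, iff_true]
      exact em _
    calc (1:ℝ≥0∞) = ℙ (Set.univ) := measure_univ.symm
      _ = ℙ ({ω | a < (univ.filter fun i : Fin n =>
            (univ.filter fun j => R j ω = i).card = 0).card}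
          ∪ {ω | ¬ (a < (univ.filter fun i : Fin n =>
            (univ.filter fun j => R j ω = i).card = 0).card)}) := by rw [hun]
      _ ≤ _ := measure_union_le _ _
  calc 1 - ENNReal.ofReal (1 / (n : ℝ) ^ (1:ℝ))
      ≤ 1 - ℙ {ω | a < (univ.filter fun i : Fin n =>
          (univ.filter fun j => R j ω = i).card = 0).card} := tsub_le_tsub_left h3 1
    _ ≤ ℙ {ω | ¬ (a < (univ.filter fun i : Fin n =>
          (univ.filter fun j => R j ω = i).card = 0).card)} := by
        rw [tsub_le_iff_right]
        rw [add_comm] at hsplit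
        exact hsplit
    _ ≤ ℙ {ω | (n : ℝ) / 8 ≤ ((Finset.univ.filter (fun i : Fin n =>
          (Finset.univ.filter (fun j => R j ω = i)).card = 1)).card : ℝ)} :=
        measure_mono hincl
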